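/- Let D_s be a fixed digraph on n_s vertices whose bipartite graph B(Ā_s) has a perfect matching (structurally cyclic subsystem). Take k disjoint copies of D_s plus an input vertex u with given edges into the copies, and let q be the number of non-top-linked SCCs of the copies not reachable from u. Assume arbitrary interconnection edges between distinct copies are allowed and each inaccessible non-top-linked SCC lies in a copy different from some copy containing a reachable vertex, with at least one vertex reachable from u. Then the minimum number of interconnection edges whose addition makes (i) every vertex reachable from u and (ii) the bipartite graph of the composite system with the input column have a perfect matching, is exactly q. -/

import Mathlib

/-- A strongly connected component: a nonempty, mutually reachable, maximal vertex set. -/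
def IsSCC {V : Type*} (D : V → V → Prop) (s : Set V) : Prop :=
  s.Nonempty ∧ (∀ v ∈ s, ∀ w ∈ s, Relation.ReflTransGen D v w) ∧
    ∀ t : Set V, s ⊆ t → (∀ v ∈ t, ∀ w ∈ t, Relation.ReflTransGen D v w) → t = s

/-- Within-copy edges of the composite of `k` copies of `Ds`. -/
def blockRel {k ns : ℕ} (Ds : Fin ns → Fin ns → Prop) :
    (Fin k × Fin ns) → (Fin k × Fin ns) → Prop :=
  fun p q => p.1 = q.1 ∧ Ds p.2 q.2

def sccOf {V : Type*} (R : V → V → Prop) (x : V) : Set V :=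
  {y | Relation.ReflTransGen R x y ∧ Relation.ReflTransGen R y x}

lemma mem_sccOf {V : Type*} (R : V → V → Prop) (x : V) : x ∈ sccOf R x :=
  ⟨.refl, .refl⟩

lemma isSCC_sccOf {V : Type*} (R : V → V → Prop) (x : V) : IsSCC R (sccOf R x) := by
  refine ⟨⟨x, mem_sccOf R x⟩, fun v hv w hw => hv.2.trans hw.1, fun t hst ht => ?_⟩
  ext z
  refine ⟨fun hz => ⟨ht x (hst (mem_sccOf R x)) z hz, ht z hz x (hst (mem_sccOf R x))⟩,
    fun hz => hst hz⟩

lemma scc_eq_of_mem {V : Type*} {R : V → V → Prop} {s t : Set V}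
    (hs : IsSCC R s) (ht : IsSCC R t) {x : V} (hxs : x ∈ s) (hxt : x ∈ t) : s = t := by
  have hmut : ∀ v ∈ s ∪ t, ∀ w ∈ s ∪ t, Relation.ReflTransGen R v w := by
    rintro v (hv | hv) w (hw | hw)
    · exact hs.2.1 v hv w hw
    · exact (hs.2.1 v hv x hxs).trans (ht.2.1 x hxt w hw)
    · exact (ht.2.1 v hv x hxt).trans (hs.2.1 x hxs w hw)
    · exact ht.2.1 v hv w hw
  have h1 := hs.2.2 (s ∪ t) Set.subset_union_left hmut
  have h2 := ht.2.2 (s ∪ t) Set.subset_union_right hmut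
  exact h1.symm.trans h2

lemma exists_source {V : Type*} [Fintype V] (R : V → V → Prop) (x : V) :
    ∃ s : Set V, IsSCC R s ∧ (∀ a ∉ s, ∀ b ∈ s, ¬ R a b) ∧
      ∃ y ∈ s, Relation.ReflTransGen R y x := by
  classical
  suffices H : ∀ n (x : V), {y | Relation.ReflTransGen R y x}.ncard ≤ n →
      ∃ s : Set V, IsSCC R s ∧ (∀ a ∉ s, ∀ b ∈ s, ¬ R a b) ∧
        ∃ y ∈ s, Relation.ReflTransGen R y x by
    exact H _ x le_rfl
  intro n
  induction n with
  | zero =>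
    intro x hx
    exfalso
    have : x ∈ {y | Relation.ReflTransGen R y x} := Relation.ReflTransGen.refl
    have := Set.ncard_pos (Set.toFinite _) |>.mpr ⟨x, this⟩
    omega
  | succ n ih =>
    intro x hx
    by_cases hsrc : ∀ a ∉ sccOf R x, ∀ b ∈ sccOf R x, ¬ R a b
    · exact ⟨sccOf R x, isSCC_sccOf R x, hsrc, x, mem_sccOf R x, .refl⟩
    · push_neg at hsrc
      obtain ⟨a, ha, b, hb, hab⟩ := hsrc
      have hax : Relation.ReflTransGen R a x := (Relation.ReflTransGen.single hab).trans hb.2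
      have hsub : {y | Relation.ReflTransGen R y a} ⊂ {y | Relation.ReflTransGen R y x} := by
        constructor
        · intro y hy
          exact hy.trans hax
        · intro hsup
          have : Relation.ReflTransGen R x a := hsup Relation.ReflTransGen.refl
          exact ha ⟨this, hax⟩
      have hlt : {y | Relation.ReflTransGen R y a}.ncard <
          {y | Relation.ReflTransGen R y x}.ncard :=
        Set.ncard_lt_ncard hsub (Set.toFinite _)
      obtain ⟨s, hs1, hs2, y, hy, hyx⟩ := ih a (by omega)
      exact ⟨s, hs1, hs2, y, hy, hyx.trans hax⟩

lemma enter_scc {V : Type*} {R : V → V → Prop} (I : Finset (V × V)) (S : Set V)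
    (hNTL : ∀ x ∉ S, ∀ y ∈ S, ¬ R x y) :
    ∀ a b : V, Relation.ReflTransGen (fun a c => R a c ∨ (a, c) ∈ I) a b →
      a ∉ S → b ∈ S → ∃ p ∈ I, p.2 ∈ S := by
  intro a b h
  induction h using Relation.ReflTransGen.head_induction_on with
  | refl => intro ha hb; exact absurd hb ha
  | head hstep _ ih =>
    rename_i a' c _
    intro ha hb
    by_cases hc : c ∈ S
    · rcases hstep with hR | hI
      · exact absurd hR (hNTL a' ha c hc)
      · exact ⟨(a', c), hI, hc⟩
    · exact ih hc hb

/-- Structurally cyclic case: each copy's bipartite graph has a perfect matching (`hpm`).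
With `q` distinct inaccessible non-top-linked SCCs (each in a copy different from that of
some reachable vertex, all other non-top-linked SCCs reachable), the minimum number of
interconnection edges achieving (i) reachability of every state from the input and
(ii) a perfect matching of the composite bipartite graph with the input column,
is exactly `q`. -/
theorem stmt16 {k ns q : ℕ} (Ds : Fin ns → Fin ns → Prop)
    (hpm : ∃ f : Fin ns → Fin ns, Function.Injective f ∧ ∀ s, Ds (f s) s)
    (U : Set (Fin k × Fin ns))
    (v₀ : Fin k × Fin ns)
    (hv₀ : ∃ s ∈ U, Relation.ReflTransGen (blockRel Ds) s v₀)
    (N : Fin q → Set (Fin k × Fin ns))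
    (hSCC : ∀ j, IsSCC (blockRel Ds) (N j))
    (hNTL : ∀ j, ∀ x ∉ N j, ∀ y ∈ N j, ¬ blockRel Ds x y)
    (hinacc : ∀ j, ∀ y ∈ N j, ¬ ∃ s ∈ U, Relation.ReflTransGen (blockRel Ds) s y)
    (hinj : Function.Injective N)
    (hcross : ∀ j, ∃ v : Fin k × Fin ns,
      (∃ s ∈ U, Relation.ReflTransGen (blockRel Ds) s v) ∧ ∀ x ∈ N j, v.1 ≠ x.1)
    (hcomplete : ∀ s : Set (Fin k × Fin ns), IsSCC (blockRel Ds) s →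
      (∀ x ∉ s, ∀ y ∈ s, ¬ blockRel Ds x y) →
      (∃ j, s = N j) ∨ ∃ y ∈ s, ∃ t ∈ U, Relation.ReflTransGen (blockRel Ds) t y) :
    IsLeast {n : ℕ |
      ∃ I : Finset ((Fin k × Fin ns) × (Fin k × Fin ns)),
        (∀ e ∈ I, (e : (Fin k × Fin ns) × (Fin k × Fin ns)).1.1 ≠
          (e : (Fin k × Fin ns) × (Fin k × Fin ns)).2.1) ∧
        I.card = n ∧
        (∀ x : Fin k × Fin ns, ∃ s ∈ U,
          Relation.ReflTransGen (fun a c => blockRel Ds a c ∨ (a, c) ∈ I) s x) ∧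
        (∃ g : Fin k × Fin ns → (Fin k × Fin ns) ⊕ Unit, Function.Injective g ∧
          ∀ x, (∀ y, g x = Sum.inl y → (blockRel Ds y x ∨ (y, x) ∈ I)) ∧
            (g x = Sum.inr () → x ∈ U))} q := by
  classical
  obtain ⟨f, hf_inj, hf⟩ := hpm
  constructor
  · -- q is in the set
    choose v hv hvcross using hcross
    choose w hw using fun j => (hSCC j).1
    set I : Finset ((Fin k × Fin ns) × (Fin k × Fin ns)) :=
      Finset.image (fun j => (v j, w j)) Finset.univ with hI
    have hvw_inj : Function.Injective (fun j => (v j, w j)) := by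
      intro j j' h
      have hw' : w j = w j' := congrArg Prod.snd h
      have : N j = N j' := scc_eq_of_mem (hSCC j) (hSCC j') (hw j) (hw' ▸ hw j')
      exact hinj this
    refine ⟨I, ?_, ?_, ?_, ?_⟩
    · intro e he
      simp only [hI, Finset.mem_image, Finset.mem_univ, true_and] at he
      obtain ⟨j, rfl⟩ := he
      exact hvcross j (w j) (hw j)
    · rw [hI, Finset.card_image_of_injective _ hvw_inj, Finset.card_univ, Fintype.card_fin]
    · -- reachability
      intro x
      obtain ⟨s, hs1, hs2, y, hy, hyx⟩ := exists_source (blockRel Ds) x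
      have lift : ∀ a b, Relation.ReflTransGen (blockRel Ds) a b →
          Relation.ReflTransGen (fun a c => blockRel Ds a c ∨ (a, c) ∈ I) a b :=
        fun a b h => Relation.ReflTransGen.mono (fun _ _ hr => Or.inl hr) a b h
      rcases hcomplete s hs1 hs2 with ⟨j, rfl⟩ | ⟨y', hy', t, ht, hty'⟩
      · obtain ⟨t, ht, htv⟩ := hv j
        refine ⟨t, ht, ?_⟩
        have hIedge : (v j, w j) ∈ I :=
          Finset.mem_image.mpr ⟨j, Finset.mem_univ j, rfl⟩
        have h1 : Relation.ReflTransGen (fun a c => blockRel Ds a c ∨ (a, c) ∈ I)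
            (v j) (w j) := Relation.ReflTransGen.single (Or.inr hIedge)
        have h2 : Relation.ReflTransGen (blockRel Ds) (w j) y :=
          (hSCC j).2.1 (w j) (hw j) y hy
        exact ((lift t (v j) htv).trans h1).trans ((lift _ _ h2).trans (lift _ _ hyx))
      · refine ⟨t, ht, ?_⟩
        have h2 : Relation.ReflTransGen (blockRel Ds) y' y := hs1.2.1 y' hy' y hy
        exact (lift _ _ hty').trans ((lift _ _ h2).trans (lift _ _ hyx))
    · -- matching
      refine ⟨fun p => Sum.inl (p.1, f p.2), ?_, ?_⟩
      · intro a b h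
        simp only [Sum.inl.injEq, Prod.mk.injEq] at h
        exact Prod.ext h.1 (hf_inj h.2)
      · intro x
        constructor
        · intro y hy
          simp only [Sum.inl.injEq] at hy
          exact Or.inl (hy ▸ ⟨rfl, hf x.2⟩)
        · intro h; simp at h
  · -- lower bound
    rintro n ⟨I, _, hcard, hreach, -⟩
    choose y hy using fun j => (hSCC j).1
    have key : ∀ j, ∃ p ∈ I, p.2 ∈ N j := by
      intro j
      obtain ⟨s, hs, hpath⟩ := hreach (y j)
      have hsN : s ∉ N j := by
        intro hsN
        exact hinacc j s hsN ⟨s, hs, Relation.ReflTransGen.refl⟩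
      exact enter_scc I (N j) (hNTL j) s (y j) hpath hsN (hy j)
    choose e he heN using key
    have : (Finset.univ : Finset (Fin q)).card ≤ I.card := by
      apply Finset.card_le_card_of_injOn e (fun j _ => he j)
      intro j _ j' _ hjj'
      have : N j = N j' := scc_eq_of_mem (hSCC j) (hSCC j') (heN j) (hjj' ▸ heN j')
      exact hinj this
    rwa [Finset.card_univ, Fintype.card_fin, hcard] at this
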